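/- Let f∈𝒦⁻ and write f² for the function n↦f(n)². Then for every φ in the span of {ξ_n − ξ_{n+1} : n∈ℕ}, the operator S = f(N)T_{f²} + T_{f²}f(N) satisfies φ ∈ D(f(N)S)∩D(Sf(N)) and f(N)Sφ − S f(N)φ = −iφ. -/

import Mathlib

open Filter Topology
open scoped ENNReal

noncomputable section

abbrev l2 : Type := lp (fun _ : ℕ => ℂ) 2

def xi (n : ℕ) : l2 := lp.single 2 n 1

def FinSupp (φ : l2) : Prop := (Function.support (⇑φ : ℕ → ℂ)).Finite

/-- The class 𝒦. -/
def MemK (f : ℕ → ℝ) : Prop := 0 < f 0 ∧ ∀ n, f n < f (n + 1)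

/-- The class 𝒦⁻. -/
def MemKminus (f : ℕ → ℝ) : Prop := MemK f ∧ Summable (fun n => 1 / (f n) ^ 2)

def fsq (f : ℕ → ℝ) : ℕ → ℝ := fun n => (f n) ^ 2

/-- the sequence of the multiplication operator `f(N)` applied to φ -/
def mulSeq (f : ℕ → ℝ) (φ : ℕ → ℂ) : ℕ → ℂ := fun n => ((f n : ℝ) : ℂ) * φ n

/-- the sequence of `f(N)^p` applied to φ -/
def powSeq (f : ℕ → ℝ) (p : ℕ) (φ : ℕ → ℂ) : ℕ → ℂ := fun n => (((f n) ^ p : ℝ) : ℂ) * φ n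

/-- coordinates of `T_{f,m} φ`. -/
def TfmSeq (f : ℕ → ℝ) (m : ℕ) (φ : ℕ → ℂ) : ℕ → ℂ := fun n =>
  Complex.I * ∑ k ∈ Finset.Icc 1 m,
    ((if k ≤ n then φ (n - k) / ((f n - f (n - k) : ℝ) : ℂ) else 0)
      - φ (n + k) / ((f (n + k) - f n : ℝ) : ℂ))

/-- `(φ, ψ)` is in the graph of `T_f`. -/
def InGraphTf (f : ℕ → ℝ) (φ ψ : l2) : Prop :=
  ∃ h : ∀ m, Memℓp (TfmSeq f m (⇑φ)) 2,
    Tendsto (fun m => (⟨TfmSeq f m (⇑φ), h m⟩ : l2)) atTop (𝓝 ψ)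


/-- `(φ, ψ)` is in the graph of `S = f(N) T_{f²} + T_{f²} f(N)`, whose domain is
`D(f(N) T_{f²}) ∩ D(T_{f²} f(N))`. -/
def InGraphS (f : ℕ → ℝ) (φ ψ : l2) : Prop :=
  ∃ (T2φ T2Fφ : l2) (hF : Memℓp (mulSeq f ⇑φ) 2) (hFT : Memℓp (mulSeq f ⇑T2φ) 2),
    InGraphTf (fsq f) φ T2φ ∧
    InGraphTf (fsq f) (⟨mulSeq f ⇑φ, hF⟩ : l2) T2Fφ ∧
    ψ = (⟨mulSeq f ⇑T2φ, hFT⟩ : l2) + T2Fφ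

-- ===== auxiliary lemmas =====

theorem MemK.strictMono {f : ℕ → ℝ} (hf : MemK f) : StrictMono f :=
  strictMono_nat_of_lt_succ hf.2

theorem MemK.pos {f : ℕ → ℝ} (hf : MemK f) (n : ℕ) : 0 < f n :=
  lt_of_lt_of_le hf.1 (hf.strictMono.monotone (Nat.zero_le n))

theorem fsq_pos {f : ℕ → ℝ} (hf : MemK f) (n : ℕ) : 0 < fsq f n := by
  have h := hf.pos n
  simp only [fsq]; positivity

theorem fsq_strictMono {f : ℕ → ℝ} (hf : MemK f) : StrictMono (fsq f) := by
  intro a b hab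
  exact pow_lt_pow_left₀ (hf.strictMono hab) (hf.pos a).le (by norm_num)

theorem meml2_of_sq_summable (x : ℕ → ℂ) (h : Summable (fun n => ‖x n‖ ^ 2)) :
    Memℓp x 2 := by
  apply memℓp_gen
  have : ((2:ℝ≥0∞)).toReal = (2:ℕ) := by norm_num
  rw [this]
  simpa using h

theorem summable_shift_of_le {b c : ℕ → ℝ} (N : ℕ) (hb : Summable b)
    (h0 : ∀ n, 0 ≤ c n) (h : ∀ n, N < n → c n ≤ b n) : Summable c := by
  rw [← summable_nat_add_iff (N+1)]
  apply Summable.of_nonneg_of_le (fun n => h0 _) (fun n => h _ (by omega))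
  exact (summable_nat_add_iff (N+1)).2 hb

theorem meml2_of_inv_f {f : ℕ → ℝ} (hf : MemKminus f) (x : ℕ → ℂ) (C : ℝ)
    (N : ℕ) (h : ∀ n, N < n → ‖x n‖ ≤ C / f n) : Memℓp x 2 := by
  apply meml2_of_sq_summable
  apply summable_shift_of_le N (hf.2.mul_left (C^2)) (fun n => sq_nonneg _)
  intro n hn
  have hfn : 0 < f n := MemK.pos hf.1 n
  calc ‖x n‖ ^ 2 ≤ (C / f n) ^ 2 := pow_le_pow_left₀ (norm_nonneg _) (h n hn) 2
    _ = C ^ 2 * (1 / f n ^ 2) := by field_simp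

theorem meml2_of_finsupp (x : ℕ → ℂ) (N : ℕ) (h : ∀ n, N < n → x n = 0) : Memℓp x 2 := by
  apply meml2_of_sq_summable
  apply summable_shift_of_le N summable_zero (fun n => sq_nonneg _)
  intro n hn
  simp [h n hn]

-- generic reindexing lemmas
theorem sum_if_shift {M : Type*} [AddCommMonoid M] (F : ℕ → M) (n m : ℕ) (hm : n ≤ m) :
    ∑ k ∈ Finset.Icc 1 m, (if k ≤ n then F (n - k) else 0) = ∑ j ∈ Finset.range n, F j := by
  rw [← Finset.sum_subset (Finset.Icc_subset_Icc_right hm)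
    (fun x hx hx2 => by
      rw [if_neg]
      simp only [Finset.mem_Icc] at hx hx2
      omega)]
  rw [Finset.sum_congr rfl (fun k hk => if_pos (Finset.mem_Icc.1 hk).2)]
  apply Finset.sum_nbij' (i := fun k => n - k) (j := fun j => n - j)
  · intro a ha; simp only [Finset.mem_Icc] at ha; simp only [Finset.mem_range]; omega
  · intro a ha; simp only [Finset.mem_range] at ha; simp only [Finset.mem_Icc]; omega
  · intro a ha; simp only [Finset.mem_Icc] at ha; omega
  · intro a ha; simp only [Finset.mem_range] at ha; omega
  · intro a ha; rfl

theorem sum_shift_up {M : Type*} [AddCommMonoid M] (F : ℕ → M) (n m : ℕ) :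
    ∑ k ∈ Finset.Icc 1 m, F (n + k) = ∑ j ∈ Finset.Icc (n+1) (n+m), F j := by
  apply Finset.sum_nbij' (i := fun k => n + k) (j := fun j => j - n)
  · intro a ha; simp only [Finset.mem_Icc] at ha ⊢; omega
  · intro a ha; simp only [Finset.mem_Icc] at ha ⊢; omega
  · intro a ha; omega
  · intro a ha; simp only [Finset.mem_Icc] at ha; omega
  · intro a ha; rfl

/-- the limit sequence of `T_{g,m} φ` for `φ` supported in `[0,N]`. -/
def limTSeq (g : ℕ → ℝ) (N : ℕ) (φ : ℕ → ℂ) : ℕ → ℂ := fun n =>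
  Complex.I * ∑ j ∈ Finset.range (N+1), (if j = n then 0 else φ j / ((g n - g j : ℝ) : ℂ))

theorem Tfm_eq (g : ℕ → ℝ) (N : ℕ) (φ : ℕ → ℂ) (hsupp : ∀ n, N < n → φ n = 0)
    (n m : ℕ) (hm : n + N + 1 ≤ m) :
    TfmSeq g m φ n = limTSeq g N φ n := by
  unfold TfmSeq limTSeq
  congr 1
  rw [Finset.sum_sub_distrib]
  rw [sum_if_shift (fun j => φ j / ((g n - g j : ℝ) : ℂ)) n m (by omega)]
  rw [sum_shift_up (fun j => φ j / ((g j - g n : ℝ) : ℂ)) n m]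
  have step1 : ∑ j ∈ Finset.range n, φ j / ((g n - g j : ℝ) : ℂ)
      = ∑ j ∈ Finset.range (N+1), (if j < n then φ j / ((g n - g j : ℝ) : ℂ) else 0) := by
    rw [show ∑ j ∈ Finset.range n, φ j / ((g n - g j : ℝ) : ℂ)
        = ∑ j ∈ Finset.range n, (if j < n then φ j / ((g n - g j : ℝ) : ℂ) else 0) from
      Finset.sum_congr rfl (fun j hj => (if_pos (Finset.mem_range.1 hj)).symm)]
    rw [Finset.sum_subset (Finset.range_subset_range.2 (le_max_left n (N+1)))
      (fun x _ hx2 => by rw [if_neg (by simpa using hx2)])]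
    rw [Finset.sum_subset (Finset.range_subset_range.2 (le_max_right n (N+1)))
      (fun x _ hx2 => by
        simp only [Finset.mem_range, not_lt] at hx2
        rw [hsupp x (by omega)]
        simp)]
  have step2 : ∑ j ∈ Finset.Icc (n+1) (n+m), φ j / ((g j - g n : ℝ) : ℂ)
      = ∑ j ∈ Finset.range (N+1), (if n < j then φ j / ((g j - g n : ℝ) : ℂ) else 0) := by
    rw [show ∑ j ∈ Finset.Icc (n+1) (n+m), φ j / ((g j - g n : ℝ) : ℂ)
        = ∑ j ∈ Finset.Icc (n+1) (n+m), (if n < j then φ j / ((g j - g n : ℝ) : ℂ) else 0) from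
      Finset.sum_congr rfl (fun j hj => (if_pos (by
        simp only [Finset.mem_Icc] at hj; omega)).symm)]
    rw [Finset.sum_subset (show Finset.Icc (n+1) (n+m) ⊆ Finset.range (n+m+1) by
        intro x hx; simp only [Finset.mem_Icc] at hx; simp only [Finset.mem_range]; omega)
      (fun x hx hx2 => by
        simp only [Finset.mem_range] at hx
        simp only [Finset.mem_Icc, not_and, not_le] at hx2
        rw [if_neg (by omega)])]
    rw [Finset.sum_subset (Finset.range_subset_range.2 (show N+1 ≤ n+m+1 by omega))
      (fun x _ hx2 => by
        simp only [Finset.mem_range, not_lt] at hx2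
        rw [hsupp x (by omega)]
        simp)]
  rw [step1, step2, ← Finset.sum_sub_distrib]
  apply Finset.sum_congr rfl
  intro j hj
  rcases lt_trichotomy j n with h | h | h
  · rw [if_pos h, if_neg (show ¬ n < j by omega), sub_zero, if_neg (show ¬ j = n by omega)]
  · rw [if_neg (show ¬ j < n by omega), if_neg (show ¬ n < j by omega), sub_zero,
      if_pos h]
  · rw [if_neg (show ¬ j < n by omega), if_pos h, zero_sub, if_neg (show ¬ j = n by omega)]
    rw [show ((g n - g j : ℝ) : ℂ) = -((g j - g n : ℝ) : ℂ) by push_cast; ring]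
    rw [div_neg]

/-- lower-bound constant for denominators -/
def epsC (f : ℕ → ℝ) (N : ℕ) : ℝ := (fsq f (N+1) - fsq f N) / fsq f (N+1)

/-- `ℓ¹`-mass of the truncated sequence -/
def Wmass (φ : ℕ → ℂ) (N : ℕ) : ℝ := ∑ j ∈ Finset.range (N+1), ‖φ j‖

theorem epsC_pos {f : ℕ → ℝ} (hf : MemK f) (N : ℕ) : 0 < epsC f N :=
  div_pos (sub_pos.2 (fsq_strictMono hf (Nat.lt_succ_self N))) (fsq_pos hf (N+1))

theorem Wmass_nonneg (φ : ℕ → ℂ) (N : ℕ) : 0 ≤ Wmass φ N :=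
  Finset.sum_nonneg (fun j _ => norm_nonneg _)

theorem gap_bound {f : ℕ → ℝ} (hf : MemK f) {N j n : ℕ} (hj : j ≤ N) (hn : N < n) :
    epsC f N * fsq f n ≤ fsq f n - fsq f j := by
  have h1 : fsq f j ≤ fsq f N := (fsq_strictMono hf).monotone hj
  have h2 : fsq f N < fsq f (N+1) := fsq_strictMono hf (Nat.lt_succ_self N)
  have h3 : fsq f (N+1) ≤ fsq f n := (fsq_strictMono hf).monotone hn
  have h4 : 0 < fsq f j := fsq_pos hf j
  have h5 : 0 < fsq f (N+1) := fsq_pos hf (N+1)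
  rw [epsC, div_mul_eq_mul_div, div_le_iff₀ h5]
  nlinarith

theorem term_bound {f : ℕ → ℝ} (hf : MemK f) {N j n : ℕ} (hj : j ≤ N) (hn : N < n) (x : ℂ) :
    ‖x / ((fsq f n - fsq f j : ℝ) : ℂ)‖ ≤ ‖x‖ * (1 / (epsC f N * fsq f n)) := by
  have h0 : 0 < epsC f N * fsq f n := mul_pos (epsC_pos hf N) (fsq_pos hf n)
  have h1 : epsC f N * fsq f n ≤ fsq f n - fsq f j := gap_bound hf hj hn
  rw [norm_div, Complex.norm_real, mul_one_div]
  exact div_le_div_of_nonneg_left (norm_nonneg _) h0 (le_trans h1 (le_abs_self _))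

theorem limT_bound {f : ℕ → ℝ} (hf : MemK f) (N : ℕ) (φ : ℕ → ℂ) {n : ℕ} (hn : N < n) :
    ‖limTSeq (fsq f) N φ n‖ ≤ (Wmass φ N / epsC f N) / fsq f n := by
  unfold limTSeq
  rw [norm_mul, Complex.norm_I, one_mul]
  calc ‖∑ j ∈ Finset.range (N+1), (if j = n then 0 else φ j / ((fsq f n - fsq f j : ℝ) : ℂ))‖
      ≤ ∑ j ∈ Finset.range (N+1), ‖(if j = n then 0 else φ j / ((fsq f n - fsq f j : ℝ) : ℂ))‖ :=
        norm_sum_le _ _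
    _ ≤ ∑ j ∈ Finset.range (N+1), ‖φ j‖ * (1 / (epsC f N * fsq f n)) := by
        apply Finset.sum_le_sum
        intro j hj
        simp only [Finset.mem_range] at hj
        rw [if_neg (show ¬ j = n by omega)]
        exact term_bound hf (by omega) hn _
    _ = Wmass φ N * (1 / (epsC f N * fsq f n)) := by rw [← Finset.sum_mul]; rfl
    _ = (Wmass φ N / epsC f N) / fsq f n := by
        field_simp

theorem Tfm_bound {f : ℕ → ℝ} (hf : MemK f) (N : ℕ) (φ : ℕ → ℂ)
    (hsupp : ∀ k, N < k → φ k = 0) (m : ℕ) {n : ℕ} (hn : N < n) :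
    ‖TfmSeq (fsq f) m φ n‖ ≤ (Wmass φ N / epsC f N) / fsq f n := by
  have hW : ∑ k ∈ Finset.Icc 1 m, (if k ≤ n then ‖φ (n-k)‖ else 0) ≤ Wmass φ N := by
    calc ∑ k ∈ Finset.Icc 1 m, (if k ≤ n then ‖φ (n-k)‖ else 0)
        ≤ ∑ k ∈ Finset.Icc 1 (max m n), (if k ≤ n then ‖φ (n-k)‖ else 0) := by
          apply Finset.sum_le_sum_of_subset_of_nonneg
            (Finset.Icc_subset_Icc_right (le_max_left m n))
          intro i _ _; positivity
      _ = ∑ j ∈ Finset.range n, ‖φ j‖ :=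
          sum_if_shift (fun j => ‖φ j‖) n (max m n) (le_max_right m n)
      _ ≤ ∑ j ∈ Finset.range (max n (N+1)), ‖φ j‖ := by
          apply Finset.sum_le_sum_of_subset_of_nonneg
            (Finset.range_subset_range.2 (le_max_left n (N+1)))
          intro i _ _; positivity
      _ = Wmass φ N := by
          refine (Finset.sum_subset (Finset.range_subset_range.2 (le_max_right n (N+1)))
            (fun x _ hx => ?_)).symm
          simp only [Finset.mem_range, not_lt] at hx
          rw [hsupp x (by omega), norm_zero]
  unfold TfmSeq
  rw [norm_mul, Complex.norm_I, one_mul]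
  calc ‖∑ k ∈ Finset.Icc 1 m,
        ((if k ≤ n then φ (n - k) / ((fsq f n - fsq f (n - k) : ℝ) : ℂ) else 0)
          - φ (n + k) / ((fsq f (n + k) - fsq f n : ℝ) : ℂ))‖
      ≤ ∑ k ∈ Finset.Icc 1 m,
        ‖((if k ≤ n then φ (n - k) / ((fsq f n - fsq f (n - k) : ℝ) : ℂ) else 0)
          - φ (n + k) / ((fsq f (n + k) - fsq f n : ℝ) : ℂ))‖ := norm_sum_le _ _
    _ ≤ ∑ k ∈ Finset.Icc 1 m, (if k ≤ n then ‖φ (n-k)‖ else 0) * (1 / (epsC f N * fsq f n)) := by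
        apply Finset.sum_le_sum
        intro k hk
        rw [hsupp (n+k) (by omega), zero_div, sub_zero]
        by_cases hkn : k ≤ n
        · rw [if_pos hkn, if_pos hkn]
          by_cases hnk : n - k ≤ N
          · exact term_bound hf hnk hn _
          · rw [hsupp (n-k) (by omega)]
            simp [Wmass_nonneg]
        · rw [if_neg hkn, if_neg hkn, norm_zero, zero_mul]
    _ = (∑ k ∈ Finset.Icc 1 m, (if k ≤ n then ‖φ (n-k)‖ else 0)) * (1 / (epsC f N * fsq f n)) :=
        (Finset.sum_mul _ _ _).symm
    _ ≤ Wmass φ N * (1 / (epsC f N * fsq f n)) := by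
        apply mul_le_mul_of_nonneg_right hW
        have h1 := epsC_pos hf N
        have h2 := fsq_pos hf n
        positivity
    _ = (Wmass φ N / epsC f N) / fsq f n := by
        have h1 := (epsC_pos hf N).ne'
        have h2 := (fsq_pos hf n).ne'
        field_simp

theorem Tfm_finsupp (g : ℕ → ℝ) (N : ℕ) (φ : ℕ → ℂ) (hsupp : ∀ k, N < k → φ k = 0)
    (m : ℕ) {n : ℕ} (hn : N + m < n) : TfmSeq g m φ n = 0 := by
  unfold TfmSeq
  rw [Finset.sum_eq_zero, mul_zero]
  intro k hk
  simp only [Finset.mem_Icc] at hk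
  rw [hsupp (n+k) (by omega), zero_div, sub_zero]
  by_cases hkn : k ≤ n
  · rw [if_pos hkn, hsupp (n-k) (by omega), zero_div]
  · rw [if_neg hkn]

theorem Tfm_meml2 (g : ℕ → ℝ) (N : ℕ) (φ : ℕ → ℂ) (hsupp : ∀ k, N < k → φ k = 0)
    (m : ℕ) : Memℓp (TfmSeq g m φ) 2 :=
  meml2_of_finsupp _ (N + m) (fun n hn => Tfm_finsupp g N φ hsupp m hn)

theorem div_fsq_le {f : ℕ → ℝ} (hf : MemK f) (D : ℝ) (hD : 0 ≤ D) (n : ℕ) :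
    D / fsq f n ≤ (D / f 0) / f n := by
  have h0 : 0 < f 0 := hf.1
  have hn : 0 < f n := hf.pos n
  have h1 : f 0 ≤ f n := hf.strictMono.monotone (Nat.zero_le n)
  rw [div_div, fsq]
  apply div_le_div_of_nonneg_left hD (by positivity)
  nlinarith

theorem limT_meml2 {f : ℕ → ℝ} (hf : MemKminus f) (N : ℕ) (φ : ℕ → ℂ) :
    Memℓp (limTSeq (fsq f) N φ) 2 := by
  have hC : 0 ≤ Wmass φ N / epsC f N := div_nonneg (Wmass_nonneg φ N) (epsC_pos hf.1 N).le
  apply meml2_of_inv_f hf _ ((Wmass φ N / epsC f N) / f 0) N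
  intro n hn
  exact le_trans (limT_bound hf.1 N φ hn) (div_fsq_le hf.1 _ hC n)

theorem mul_limT_meml2 {f : ℕ → ℝ} (hf : MemKminus f) (N : ℕ) (φ : ℕ → ℂ) :
    Memℓp (mulSeq f (limTSeq (fsq f) N φ)) 2 := by
  have hC : 0 ≤ Wmass φ N / epsC f N := div_nonneg (Wmass_nonneg φ N) (epsC_pos hf.1 N).le
  apply meml2_of_inv_f hf _ (Wmass φ N / epsC f N) N
  intro n hn
  have hfn : 0 < f n := hf.1.pos n
  calc ‖mulSeq f (limTSeq (fsq f) N φ) n‖ = f n * ‖limTSeq (fsq f) N φ n‖ := by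
        rw [mulSeq, norm_mul, Complex.norm_real, Real.norm_eq_abs, abs_of_pos hfn]
    _ ≤ f n * ((Wmass φ N / epsC f N) / fsq f n) :=
        mul_le_mul_of_nonneg_left (limT_bound hf.1 N φ hn) hfn.le
    _ = (Wmass φ N / epsC f N) / f n := by
        have h1 : f n ≠ 0 := hfn.ne'
        have h2 : epsC f N ≠ 0 := (epsC_pos hf.1 N).ne'
        rw [fsq]
        field_simp

theorem l2_norm_sq (x : l2) : ‖x‖ ^ 2 = ∑' n, ‖x n‖ ^ 2 := by
  have h := lp.norm_rpow_eq_tsum (p := 2) (by norm_num) x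
  simp only [ENNReal.toReal_ofNat] at h
  rw [show ((2:ℝ)) = ((2:ℕ):ℝ) by norm_num] at h
  simpa [Real.rpow_natCast] using h

theorem l2_sq_summable (x : l2) : Summable (fun n => ‖x n‖ ^ 2) := by
  have h := lp.memℓp x
  rw [memℓp_gen_iff (by norm_num)] at h
  simp only [ENNReal.toReal_ofNat] at h
  rw [show ((2:ℝ)) = ((2:ℕ):ℝ) by norm_num] at h
  simpa [Real.rpow_natCast] using h

theorem bseq_summable {f : ℕ → ℝ} (hf : MemKminus f) (D : ℝ) :
    Summable (fun n => (D / fsq f n) ^ 2) := by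
  have hfpos := hf.1.pos
  have hdom : Summable (fun n => (D^2 / f 0^2) * (1 / f n^2)) := hf.2.mul_left _
  refine Summable.of_nonneg_of_le (fun n => sq_nonneg _) (fun n => ?_) hdom
  have h0 := hfpos 0
  have hn := hfpos n
  have h1 : f 0 ≤ f n := hf.1.strictMono.monotone (Nat.zero_le n)
  simp only [fsq]
  rw [div_pow, mul_one_div, div_le_div_iff₀ (by positivity) (by positivity)]
  have h2 : f 0^2 ≤ f n^2 := by nlinarith
  calc D^2 * f n ^ 2 ≤ D^2 * (f n^2)^2 / f 0 ^2 := by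
        rw [le_div_iff₀ (by positivity)]
        nlinarith [mul_le_mul_of_nonneg_left h2 (show (0:ℝ) ≤ D^2 * f n^2 by positivity)]
    _ = D^2 / f 0^2 * (f n^2)^2 := by ring

theorem tendsto_l2_of {f : ℕ → ℝ} (hf : MemKminus f) (N : ℕ) (D : ℝ)
    (ψm : ℕ → l2) (ψ : l2)
    (heq : ∀ m n, n + N + 1 ≤ m → ψm m n = ψ n)
    (hbound : ∀ m n, N < n → ‖ψm m n - ψ n‖ ≤ D / fsq f n) :
    Tendsto ψm atTop (𝓝 ψ) := by
  have hb : Summable (fun n => (D / fsq f n) ^ 2) := bseq_summable hf D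
  have tb : Tendsto (fun j => ∑' k, (D / fsq f (k + j)) ^ 2) atTop (𝓝 0) :=
    tendsto_sum_nat_add (fun n => (D / fsq f n) ^ 2)
  have key : ∀ m, 2*N+1 ≤ m → ‖ψm m - ψ‖ ^ 2 ≤ ∑' k, (D / fsq f (k + (m - N))) ^ 2 := by
    intro m hm
    have hc : Summable (fun n => ‖ψm m n - ψ n‖ ^ 2) := by
      have h := l2_sq_summable (ψm m - ψ)
      simpa only [lp.coeFn_sub, Pi.sub_apply] using h
    calc ‖ψm m - ψ‖ ^ 2 = ∑' n, ‖(ψm m - ψ) n‖ ^ 2 := l2_norm_sq _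
      _ = ∑' n, ‖ψm m n - ψ n‖ ^ 2 :=
          tsum_congr (fun n => by rw [lp.coeFn_sub, Pi.sub_apply])
      _ = ∑ i ∈ Finset.range (m - N), ‖ψm m i - ψ i‖ ^ 2
            + ∑' k, ‖ψm m (k + (m - N)) - ψ (k + (m - N))‖ ^ 2 :=
          (Summable.sum_add_tsum_nat_add (f := fun n => ‖ψm m n - ψ n‖ ^ 2) (m - N) hc).symm
      _ = ∑' k, ‖ψm m (k + (m - N)) - ψ (k + (m - N))‖ ^ 2 := by
          rw [Finset.sum_eq_zero, zero_add]
          intro i hi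
          simp only [Finset.mem_range] at hi
          rw [heq m i (by omega), sub_self, norm_zero]
          norm_num
      _ ≤ ∑' k, (D / fsq f (k + (m - N))) ^ 2 :=
          Summable.tsum_le_tsum
            (fun k => pow_le_pow_left₀ (norm_nonneg _) (hbound m (k + (m - N)) (by omega)) 2)
            ((summable_nat_add_iff (f := fun n => ‖ψm m n - ψ n‖ ^ 2) (m - N)).2 hc)
            ((summable_nat_add_iff (f := fun n => (D / fsq f n) ^ 2) (m - N)).2 hb)
  rw [tendsto_iff_norm_sub_tendsto_zero]
  apply squeeze_zero' (Eventually.of_forall (fun m => norm_nonneg _))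
    (g := fun m => Real.sqrt (∑' k, (D / fsq f (k + (m - N))) ^ 2))
  · filter_upwards [eventually_ge_atTop (2*N+1)] with m hm
    rw [Real.le_sqrt (norm_nonneg _) (tsum_nonneg (fun k => sq_nonneg _))]
    exact key m hm
  · have h1 : Tendsto (fun m : ℕ => m - N) atTop atTop := tendsto_sub_atTop_nat N
    have h3 := (Real.continuous_sqrt.tendsto 0).comp (tb.comp h1)
    simpa [Function.comp_def] using h3

theorem inGraphTf_limT {f : ℕ → ℝ} (hf : MemKminus f) (N : ℕ) (φ : l2)
    (hsupp : ∀ n, N < n → φ n = 0) (hmem : Memℓp (limTSeq (fsq f) N ⇑φ) 2) :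
    InGraphTf (fsq f) φ (⟨limTSeq (fsq f) N ⇑φ, hmem⟩ : l2) := by
  refine ⟨fun m => Tfm_meml2 (fsq f) N ⇑φ hsupp m, ?_⟩
  apply tendsto_l2_of hf N (Wmass ⇑φ N / epsC f N + Wmass ⇑φ N / epsC f N)
  · intro m n hm
    exact Tfm_eq (fsq f) N ⇑φ hsupp n m hm
  · intro m n hn
    have h1 := Tfm_bound hf.1 N ⇑φ hsupp m hn
    have h2 := limT_bound hf.1 N ⇑φ hn
    calc ‖TfmSeq (fsq f) m ⇑φ n - limTSeq (fsq f) N ⇑φ n‖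
        ≤ ‖TfmSeq (fsq f) m ⇑φ n‖ + ‖limTSeq (fsq f) N ⇑φ n‖ := norm_sub_le _ _
      _ ≤ (Wmass ⇑φ N / epsC f N) / fsq f n + (Wmass ⇑φ N / epsC f N) / fsq f n :=
          add_le_add h1 h2
      _ = (Wmass ⇑φ N / epsC f N + Wmass ⇑φ N / epsC f N) / fsq f n := by ring

theorem xi_apply (n m : ℕ) : (xi n) m = if m = n then 1 else 0 := by
  rcases eq_or_ne m n with h | h
  · subst h; rw [if_pos rfl]; exact lp.single_apply_self 2 m 1
  · rw [if_neg h]; exact lp.single_apply_ne 2 n 1 h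

theorem sum_trunc_ext (x : ℕ → ℂ) (N M : ℕ) (h : N ≤ M) (hsupp : ∀ n, N < n → x n = 0) :
    ∑ j ∈ Finset.range (M+1), x j = ∑ j ∈ Finset.range (N+1), x j := by
  refine (Finset.sum_subset (Finset.range_subset_range.2 (by omega)) (fun j _ hj => ?_)).symm
  simp only [Finset.mem_range, not_lt] at hj
  exact hsupp j (by omega)

theorem span_props (φ : l2)
    (hφ : φ ∈ Submodule.span ℂ (Set.range fun n : ℕ => xi n - xi (n + 1))) :
    ∃ N, (∀ n, N < n → φ n = 0) ∧ ∑ j ∈ Finset.range (N+1), φ j = 0 := by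
  induction hφ using Submodule.span_induction with
  | mem x hx =>
    obtain ⟨n, rfl⟩ := hx
    refine ⟨n + 1, fun m hm => ?_, ?_⟩
    · rw [lp.coeFn_sub, Pi.sub_apply, xi_apply, xi_apply,
        if_neg (by omega), if_neg (by omega), sub_zero]
    · have : ∀ j, (xi n - xi (n+1)) j = (if j = n then 1 else 0) - (if j = n+1 then 1 else 0) := by
        intro j
        rw [lp.coeFn_sub, Pi.sub_apply, xi_apply, xi_apply]
      rw [Finset.sum_congr rfl (fun j _ => this j), Finset.sum_sub_distrib]
      rw [Finset.sum_ite_eq' (Finset.range (n+1+1)) n (fun _ => (1:ℂ)),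
        Finset.sum_ite_eq' (Finset.range (n+1+1)) (n+1) (fun _ => (1:ℂ))]
      rw [if_pos (by simp), if_pos (by simp)]
      ring
  | zero =>
    exact ⟨0, fun n _ => by simp, by simp⟩
  | add x y hx hy ihx ihy =>
    obtain ⟨N1, h1, s1⟩ := ihx
    obtain ⟨N2, h2, s2⟩ := ihy
    refine ⟨max N1 N2, fun n hn => ?_, ?_⟩
    · rw [lp.coeFn_add, Pi.add_apply, h1 n (by omega), h2 n (by omega), add_zero]
    · have hx' : ∀ n, max N1 N2 < n → (⇑x) n = 0 := fun n hn => h1 n (by omega)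
      have hy' : ∀ n, max N1 N2 < n → (⇑y) n = 0 := fun n hn => h2 n (by omega)
      calc ∑ j ∈ Finset.range (max N1 N2 + 1), (x + y) j
          = ∑ j ∈ Finset.range (max N1 N2 + 1), ((⇑x) j + (⇑y) j) := by
            refine Finset.sum_congr rfl (fun j _ => ?_)
            rw [lp.coeFn_add, Pi.add_apply]
        _ = ∑ j ∈ Finset.range (max N1 N2 + 1), (⇑x) j
            + ∑ j ∈ Finset.range (max N1 N2 + 1), (⇑y) j := Finset.sum_add_distrib
        _ = 0 := by
            rw [sum_trunc_ext (⇑x) N1 (max N1 N2) (le_max_left _ _) h1,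
              sum_trunc_ext (⇑y) N2 (max N1 N2) (le_max_right _ _) h2, s1, s2, add_zero]
  | smul c x hx ih =>
    obtain ⟨N1, h1, s1⟩ := ih
    refine ⟨N1, fun n hn => ?_, ?_⟩
    · rw [lp.coeFn_smul, Pi.smul_apply, h1 n hn, smul_zero]
    · calc ∑ j ∈ Finset.range (N1+1), (c • x) j
          = ∑ j ∈ Finset.range (N1+1), c * (⇑x) j := by
            refine Finset.sum_congr rfl (fun j _ => ?_)
            rw [lp.coeFn_smul, Pi.smul_apply, smul_eq_mul]
        _ = 0 := by rw [← Finset.mul_sum, s1, mul_zero]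

theorem key_identity {f : ℕ → ℝ} (hf : MemK f) (N : ℕ) (φ : ℕ → ℂ)
    (hsupp : ∀ n, N < n → φ n = 0)
    (hsum : ∑ j ∈ Finset.range (N+1), φ j = 0) (n : ℕ) :
    ((fsq f n : ℝ) : ℂ) * limTSeq (fsq f) N φ n
      = limTSeq (fsq f) N (fun j => ((fsq f j : ℝ) : ℂ) * φ j) n - Complex.I * φ n := by
  have hginj : Function.Injective (fsq f) := (fsq_strictMono hf).injective
  unfold limTSeq
  have main : ∑ j ∈ Finset.range (N+1),
        (((fsq f n : ℝ) : ℂ) * (if j = n then 0 else φ j / ((fsq f n - fsq f j : ℝ) : ℂ))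
          - (if j = n then 0 else (((fsq f j : ℝ) : ℂ) * φ j) / ((fsq f n - fsq f j : ℝ) : ℂ)))
      = ∑ j ∈ Finset.range (N+1), (if j = n then 0 else φ j) := by
    refine Finset.sum_congr rfl (fun j _ => ?_)
    rcases eq_or_ne j n with h | h
    · rw [if_pos h, if_pos h, if_pos h, mul_zero, sub_zero]
    · rw [if_neg h, if_neg h, if_neg h]
      have hd : ((fsq f n : ℝ) : ℂ) - ((fsq f j : ℝ) : ℂ) ≠ 0 := by
        rw [← Complex.ofReal_sub, Complex.ofReal_ne_zero, sub_ne_zero]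
        exact fun hc => h (hginj hc).symm
      rw [show ((fsq f n - fsq f j : ℝ) : ℂ) = ((fsq f n : ℝ) : ℂ) - ((fsq f j : ℝ) : ℂ) by
        push_cast; ring]
      field_simp
  have second : ∑ j ∈ Finset.range (N+1), (if j = n then 0 else φ j) = - φ n := by
    have h1 : ∀ j, (if j = n then 0 else φ j) = φ j - (if j = n then φ j else 0) := by
      intro j; rcases eq_or_ne j n with h | h
      · rw [if_pos h, if_pos h, h, sub_self]
      · rw [if_neg h, if_neg h, sub_zero]
    rw [Finset.sum_congr rfl (fun j _ => h1 j), Finset.sum_sub_distrib, hsum, zero_sub]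
    rw [Finset.sum_ite_eq' (Finset.range (N+1)) n φ]
    rcases le_or_gt n N with h | h
    · rw [if_pos (by simp only [Finset.mem_range]; omega)]
    · rw [if_neg (by simp only [Finset.mem_range]; omega), hsupp n h]
  calc ((fsq f n : ℝ) : ℂ)
        * (Complex.I * ∑ j ∈ Finset.range (N+1),
            (if j = n then 0 else φ j / ((fsq f n - fsq f j : ℝ) : ℂ)))
      = Complex.I * ∑ j ∈ Finset.range (N+1),
          ((fsq f n : ℝ) : ℂ) * (if j = n then 0 else φ j / ((fsq f n - fsq f j : ℝ) : ℂ)) := by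
        rw [← Finset.mul_sum]; ring
    _ = Complex.I * ((∑ j ∈ Finset.range (N+1),
          (((fsq f n : ℝ) : ℂ) * (if j = n then 0 else φ j / ((fsq f n - fsq f j : ℝ) : ℂ))
            - (if j = n then 0 else (((fsq f j : ℝ) : ℂ) * φ j) / ((fsq f n - fsq f j : ℝ) : ℂ))))
          + ∑ j ∈ Finset.range (N+1),
            (if j = n then 0 else (((fsq f j : ℝ) : ℂ) * φ j) / ((fsq f n - fsq f j : ℝ) : ℂ))) := by
        rw [Finset.sum_sub_distrib]; ring
    _ = Complex.I * (- φ n + ∑ j ∈ Finset.range (N+1),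
          (if j = n then 0 else (((fsq f j : ℝ) : ℂ) * φ j) / ((fsq f n - fsq f j : ℝ) : ℂ))) := by
        rw [main, second]
    _ = Complex.I * (∑ j ∈ Finset.range (N+1),
          (if j = n then 0 else (((fsq f j : ℝ) : ℂ) * φ j) / ((fsq f n - fsq f j : ℝ) : ℂ)))
        - Complex.I * φ n := by ring

/-- Let `f ∈ 𝒦⁻`, `f²(n) = f n ^ 2` and `S = f(N) T_{f²} + T_{f²} f(N)`.
Then every `φ` in the span of `{ξ_n - ξ_{n+1}}` satisfies `φ ∈ D(f(N) S) ∩ D(S f(N))` and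
`f(N) S φ - S f(N) φ = -i φ`. -/
theorem stmt8 (f : ℕ → ℝ) (hf : MemKminus f) (φ : l2)
    (hφ : φ ∈ Submodule.span ℂ (Set.range fun n : ℕ => xi n - xi (n + 1))) :
    ∃ (Sφ SFφ : l2) (hF : Memℓp (mulSeq f ⇑φ) 2) (hS : Memℓp (mulSeq f ⇑Sφ) 2),
      InGraphS f φ Sφ ∧
      InGraphS f (⟨mulSeq f ⇑φ, hF⟩ : l2) SFφ ∧
      (⟨mulSeq f ⇑Sφ, hS⟩ : l2) - SFφ = -(Complex.I • φ) := by
  obtain ⟨N, hsupp, hsum⟩ := span_props φ hφ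
  set F0 : ℕ → ℂ := ⇑φ with hF0
  set F1 : ℕ → ℂ := mulSeq f F0 with hF1
  set F2 : ℕ → ℂ := mulSeq f F1 with hF2
  have hsupp1 : ∀ n, N < n → F1 n = 0 := fun n hn => by
    rw [hF1]; simp only [mulSeq]; rw [hsupp n hn, mul_zero]
  have hsupp2 : ∀ n, N < n → F2 n = 0 := fun n hn => by
    rw [hF2]; simp only [mulSeq]; rw [hsupp1 n hn, mul_zero]
  set L0 : ℕ → ℂ := limTSeq (fsq f) N F0 with hL0d
  set L1 : ℕ → ℂ := limTSeq (fsq f) N F1 with hL1d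
  set L2 : ℕ → ℂ := limTSeq (fsq f) N F2 with hL2d
  have hL0 : Memℓp L0 2 := limT_meml2 hf N F0
  have hL1 : Memℓp L1 2 := limT_meml2 hf N F1
  have hL2 : Memℓp L2 2 := limT_meml2 hf N F2
  have hFmul0 : Memℓp (mulSeq f L0) 2 := mul_limT_meml2 hf N F0
  have hFmul1 : Memℓp (mulSeq f L1) 2 := mul_limT_meml2 hf N F1
  have hF : Memℓp F1 2 := meml2_of_finsupp F1 N hsupp1
  have hF2m : Memℓp F2 2 := meml2_of_finsupp F2 N hsupp2
  set T0 : l2 := ⟨L0, hL0⟩ with hT0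
  set T1 : l2 := ⟨L1, hL1⟩ with hT1
  set T2 : l2 := ⟨L2, hL2⟩ with hT2
  set Sφ : l2 := (⟨mulSeq f L0, hFmul0⟩ : l2) + T1 with hSφ
  set SFφ : l2 := (⟨mulSeq f L1, hFmul1⟩ : l2) + T2 with hSFφ
  -- the key pointwise identity
  have hgφ : F2 = (fun j => ((fsq f j : ℝ) : ℂ) * F0 j) := by
    funext j
    rw [hF2, hF1]
    simp only [mulSeq, fsq]
    push_cast
    ring
  have hkey : ∀ n, ((fsq f n : ℝ) : ℂ) * L0 n = L2 n - Complex.I * F0 n := by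
    intro n
    rw [hL0d, hL2d, hgφ]
    exact key_identity hf.1 N F0 hsupp hsum n
  -- coordinates of Sφ
  have hSφ_coe : ⇑Sφ = fun n => mulSeq f L0 n + L1 n := by
    rw [hSφ, lp.coeFn_add]
    rfl
  have hmulS : mulSeq f ⇑Sφ = fun n => (L2 n - Complex.I * F0 n) + mulSeq f L1 n := by
    funext n
    rw [hSφ_coe]
    simp only [mulSeq]
    rw [← hkey n]
    simp only [fsq]
    push_cast
    ring
  have hS : Memℓp (mulSeq f ⇑Sφ) 2 := by
    rw [hmulS]
    have h1 : Memℓp (fun n => L2 n - Complex.I * F0 n) 2 :=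
      hL2.sub ((lp.memℓp φ).const_mul Complex.I)
    exact h1.add hFmul1
  refine ⟨Sφ, SFφ, hF, hS, ?_, ?_, ?_⟩
  · exact ⟨T0, T1, hF, hFmul0,
      inGraphTf_limT hf N φ hsupp hL0,
      inGraphTf_limT hf N (⟨F1, hF⟩ : l2) hsupp1 hL1, rfl⟩
  · exact ⟨T1, T2, hF2m, hFmul1,
      inGraphTf_limT hf N (⟨F1, hF⟩ : l2) hsupp1 hL1,
      inGraphTf_limT hf N (⟨F2, hF2m⟩ : l2) hsupp2 hL2, rfl⟩
  · apply lp.ext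
    funext n
    rw [lp.coeFn_sub, Pi.sub_apply, lp.coeFn_neg, Pi.neg_apply, lp.coeFn_smul, Pi.smul_apply]
    have hSFφ_coe : ⇑SFφ = fun n => mulSeq f L1 n + L2 n := by
      rw [hSFφ, lp.coeFn_add]
      rfl
    have h1 : ((⟨mulSeq f ⇑Sφ, hS⟩ : l2) : ℕ → ℂ) n = mulSeq f (⇑Sφ) n := rfl
    rw [h1]
    simp only [hmulS, hSFφ_coe, smul_eq_mul]
    ring
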